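/- (Theorem 2, first part) Let T1 and T2 be read-once expression trees over Fin n, each having at least one internal node, with val T1 = val T2. Then the root chain of T1 is an addition–subtraction chain if and only if the root chain of T2 is an addition–subtraction chain (equivalently, the root of T1 is labeled with + or − if and only if the root of T2 is labeled with + or −). -/

import Mathlib

/-- The four binary arithmetic operations labeling internal nodes. -/
inductive Op : Type
  | add | sub | mul | div
deriving DecidableEq, Repr

/-- An expression tree over variables `Fin n`: a full binary tree whose leaves
are labeled by variables and whose internal nodes carry an operation. -/
inductive ETree (n : ℕ) : Type
  | leaf (v : Fin n)
  | node (op : Op) (l r : ETree n)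
deriving DecidableEq

/-- The field of rational functions in `n` variables over `ℚ`. -/
abbrev K (n : ℕ) := FractionRing (MvPolynomial (Fin n) ℚ)

/-- The list of variables labeling the leaves, from left to right. -/
def leafList {n : ℕ} : ETree n → List (Fin n)
  | .leaf v => [v]
  | .node _ l r => leafList l ++ leafList r

/-- A tree is read-once (a *valid* expression) if each variable labels at most one leaf. -/
def ReadOnce {n : ℕ} (T : ETree n) : Prop := (leafList T).Nodup

/-- The set of variables labeling leaves of a tree. -/
def leafVars {n : ℕ} (T : ETree n) : Finset (Fin n) := (leafList T).toFinset

/-- The value of an expression tree in the field of rational functions. -/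
noncomputable def val {n : ℕ} : ETree n → K n
  | .leaf v => algebraMap (MvPolynomial (Fin n) ℚ) (K n) (MvPolynomial.X v)
  | .node .add l r => val l + val r
  | .node .sub l r => val l - val r
  | .node .mul l r => val l * val r
  | .node .div l r => val l / val r

open MvPolynomial

namespace RC


variable {n : ℕ}

noncomputable abbrev φ {n : ℕ} : MvPolynomial (Fin n) ℚ →+* K n :=
  algebraMap (MvPolynomial (Fin n) ℚ) (K n)

lemma φ_inj : Function.Injective (φ (n := n)) :=
  IsFractionRing.injective _ _

lemma φ_ne_zero {a : MvPolynomial (Fin n) ℚ} (h : a ≠ 0) : φ a ≠ 0 := by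
  intro h0
  exact h (IsFractionRing.to_map_eq_zero_iff.mp h0)

lemma exists_repr (z : K n) : ∃ p : MvPolynomial (Fin n) ℚ × MvPolynomial (Fin n) ℚ,
    p.2 ≠ 0 ∧ z = φ p.1 / φ p.2 := by
  obtain ⟨x, y, hy, h⟩ := IsFractionRing.div_surjective (A := MvPolynomial (Fin n) ℚ) z
  exact ⟨(x, y), nonZeroDivisors.ne_zero hy, h.symm⟩

/-- Partial derivative on the fraction field. -/
noncomputable def Dk (i : Fin n) (z : K n) : K n :=
  (φ (pderiv i (exists_repr z).choose.1) * φ (exists_repr z).choose.2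
    - φ (exists_repr z).choose.1 * φ (pderiv i (exists_repr z).choose.2))
    / φ (exists_repr z).choose.2 ^ 2

lemma Dk_spec (i : Fin n) (a b : MvPolynomial (Fin n) ℚ) (hb : b ≠ 0) :
    Dk i (φ a / φ b) =
      (φ (pderiv i a) * φ b - φ a * φ (pderiv i b)) / φ b ^ 2 := by
  set z : K n := φ a / φ b with hz
  obtain ⟨hd, hrep⟩ := (exists_repr z).choose_spec
  set c := (exists_repr z).choose.1
  set d := (exists_repr z).choose.2
  have hb' : φ b ≠ (0 : K n) := φ_ne_zero hb
  have hd' : φ d ≠ (0 : K n) := φ_ne_zero hd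
  have hcross : a * d = c * b := by
    apply φ_inj
    rw [map_mul, map_mul]
    have : φ a / φ b = φ c / φ d := by rw [← hz, hrep]
    field_simp at this
    linear_combination this
  have e2 := congrArg (pderiv i) hcross
  simp only [pderiv_mul] at e2
  show (φ (pderiv i c) * φ d - φ c * φ (pderiv i d)) / φ d ^ 2
      = (φ (pderiv i a) * φ b - φ a * φ (pderiv i b)) / φ b ^ 2
  rw [div_eq_div_iff (pow_ne_zero 2 hd') (pow_ne_zero 2 hb')]
  have : (pderiv i c * d - c * pderiv i d) * b ^ 2
      = (pderiv i a * b - a * pderiv i b) * d ^ 2 := by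
    linear_combination (-(b*d)) * e2 + ((pderiv i b * d) + pderiv i d * b) * hcross
  calc (φ (pderiv i c) * φ d - φ c * φ (pderiv i d)) * φ b ^ 2
      = φ ((pderiv i c * d - c * pderiv i d) * b ^ 2) := by
        simp only [map_mul, map_sub, map_pow]
    _ = φ ((pderiv i a * b - a * pderiv i b) * d ^ 2) := by rw [this]
    _ = (φ (pderiv i a) * φ b - φ a * φ (pderiv i b)) * φ d ^ 2 := by
        simp only [map_mul, map_sub, map_pow]


lemma Dk_algebraMap (i : Fin n) (a : MvPolynomial (Fin n) ℚ) :
    Dk i (φ a) = φ (pderiv i a) := by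
  have h := Dk_spec i a 1 one_ne_zero
  simpa using h

lemma Dk_zero (i : Fin n) : Dk i (0 : K n) = 0 := by
  simpa using Dk_algebraMap i 0

lemma Dk_add (i : Fin n) (y z : K n) : Dk i (y + z) = Dk i y + Dk i z := by
  obtain ⟨⟨a, b⟩, hb, rfl⟩ := exists_repr y
  obtain ⟨⟨c, d⟩, hd, rfl⟩ := exists_repr z
  have hb' : φ b ≠ (0 : K n) := φ_ne_zero hb
  have hd' : φ d ≠ (0 : K n) := φ_ne_zero hd
  have hsum : φ a / φ b + φ c / φ d = φ (a * d + c * b) / φ (b * d) := by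
    rw [map_add, map_mul, map_mul, map_mul, div_add_div _ _ hb' hd']
    ring_nf
  rw [hsum, Dk_spec _ _ _ (mul_ne_zero hb hd), Dk_spec _ _ _ hb, Dk_spec _ _ _ hd]
  have h1 : pderiv i (a * d + c * b)
      = pderiv i a * d + a * pderiv i d + (pderiv i c * b + c * pderiv i b) := by
    simp [pderiv_mul]; ring
  have h2 : pderiv i (b * d) = pderiv i b * d + b * pderiv i d := pderiv_mul
  rw [h1, h2]
  simp only [map_add, map_mul]
  field_simp
  ring

lemma Dk_neg (i : Fin n) (z : K n) : Dk i (-z) = -Dk i z := by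
  obtain ⟨⟨a, b⟩, hb, rfl⟩ := exists_repr z
  have hb' : φ b ≠ (0 : K n) := φ_ne_zero hb
  have hneg : -(φ a / φ b) = φ (-a) / φ b := by rw [map_neg, neg_div]
  rw [hneg, Dk_spec _ _ _ hb, Dk_spec _ _ _ hb, map_neg, map_neg]
  field_simp
  simp only [map_neg]
  ring

lemma Dk_sub (i : Fin n) (y z : K n) : Dk i (y - z) = Dk i y - Dk i z := by
  rw [sub_eq_add_neg, Dk_add, Dk_neg, sub_eq_add_neg]

lemma Dk_mul (i : Fin n) (y z : K n) : Dk i (y * z) = Dk i y * z + y * Dk i z := by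
  obtain ⟨⟨a, b⟩, hb, rfl⟩ := exists_repr y
  obtain ⟨⟨c, d⟩, hd, rfl⟩ := exists_repr z
  have hb' : φ b ≠ (0 : K n) := φ_ne_zero hb
  have hd' : φ d ≠ (0 : K n) := φ_ne_zero hd
  have hp : φ a / φ b * (φ c / φ d) = φ (a * c) / φ (b * d) := by
    rw [map_mul, map_mul]; ring
  rw [hp, Dk_spec _ _ _ (mul_ne_zero hb hd), Dk_spec _ _ _ hb, Dk_spec _ _ _ hd]
  have h1 : pderiv i (a * c) = pderiv i a * c + a * pderiv i c := pderiv_mul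
  have h2 : pderiv i (b * d) = pderiv i b * d + b * pderiv i d := pderiv_mul
  rw [h1, h2]
  simp only [map_add, map_mul]
  field_simp
  ring

lemma Dk_inv (i : Fin n) (z : K n) (hz : z ≠ 0) : Dk i z⁻¹ = -(Dk i z / z ^ 2) := by
  obtain ⟨⟨a, b⟩, hb, rfl⟩ := exists_repr z
  have hb' : φ b ≠ (0 : K n) := φ_ne_zero hb
  have ha : a ≠ 0 := by
    rintro rfl; simp at hz
  have ha' : φ a ≠ (0 : K n) := φ_ne_zero ha
  have hinv : (φ a / φ b)⁻¹ = φ b / φ a := by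
    rw [inv_div]
  rw [hinv, Dk_spec _ _ _ ha, Dk_spec _ _ _ hb]
  field_simp
  ring

lemma Dk_div (i : Fin n) (y z : K n) (hz : z ≠ 0) :
    Dk i (y / z) = (Dk i y * z - y * Dk i z) / z ^ 2 := by
  rw [div_eq_mul_inv, Dk_mul, Dk_inv _ _ hz]
  field_simp
  ring

lemma pderiv_comm (i j : Fin n) (p : MvPolynomial (Fin n) ℚ) :
    pderiv i (pderiv j p) = pderiv j (pderiv i p) := by
  classical
  induction p using MvPolynomial.induction_on with
  | C a => simp
  | add p q hp hq => simp [hp, hq]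
  | mul_X p k hp =>
    have hjx : ∀ m m' : Fin n, pderiv m (pderiv m' (X k : MvPolynomial (Fin n) ℚ)) = 0 := by
      intro m m'
      rcases eq_or_ne m' k with rfl | h
      · simp
      · simp [pderiv_X_of_ne (Ne.symm h)]
    simp only [pderiv_mul, map_add, pderiv_mul, hp]
    rw [hjx i j, hjx j i]
    ring

lemma Dk_comm (i j : Fin n) (z : K n) : Dk i (Dk j z) = Dk j (Dk i z) := by
  obtain ⟨⟨a, b⟩, hb, rfl⟩ := exists_repr z
  have key : ∀ u v : Fin n,
      Dk u (Dk v (φ a / φ b)) =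
        φ ((pderiv u (pderiv v a * b - a * pderiv v b)) * b ^ 2
            - (pderiv v a * b - a * pderiv v b) * pderiv u (b ^ 2)) / φ (b ^ 2) ^ 2 := by
    intro u v
    have h1 : Dk v (φ a / φ b) = φ (pderiv v a * b - a * pderiv v b) / φ (b ^ 2) := by
      rw [Dk_spec _ _ _ hb]
      simp only [map_mul, map_sub, map_pow]
    rw [h1, Dk_spec _ _ _ (pow_ne_zero 2 hb)]
    simp only [map_mul, map_sub, map_pow]
  rw [key i j, key j i]
  congr 1
  apply congrArg
  simp only [pderiv_mul, map_sub, map_add, pderiv_pow]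
  rw [pderiv_comm i j a, pderiv_comm i j b]
  ring


lemma leafVars_node (op : Op) (l r : ETree n) :
    leafVars (ETree.node op l r) = leafVars l ∪ leafVars r := by
  simp [leafVars, leafList]

lemma leafVars_nonempty (T : ETree n) : (leafVars T).Nonempty := by
  induction T with
  | leaf v => exact ⟨v, by simp [leafVars, leafList]⟩
  | node op l r ihl ihr =>
    obtain ⟨x, hx⟩ := ihl
    exact ⟨x, by rw [leafVars_node]; exact Finset.mem_union_left _ hx⟩

lemma readOnce_node {op : Op} {l r : ETree n} (h : ReadOnce (ETree.node op l r)) :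
    ReadOnce l ∧ ReadOnce r ∧ Disjoint (leafVars l) (leafVars r) := by
  have h' := h
  unfold ReadOnce leafList at h'
  rw [List.nodup_append] at h'
  refine ⟨h'.1, h'.2.1, ?_⟩
  rw [Finset.disjoint_left]
  intro a ha hb
  exact h'.2.2 a (by simpa [leafVars] using ha) a (by simpa [leafVars] using hb) rfl

/-- Main induction: a read-once tree's value has nonzero derivative exactly at its leaf
variables. -/
lemma deriv_val (T : ETree n) (hT : ReadOnce T) :
    (∀ i, i ∉ leafVars T → Dk i (val T) = 0) ∧ (∀ i, i ∈ leafVars T → Dk i (val T) ≠ 0) := by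
  induction T with
  | leaf v =>
    constructor
    · intro i hi
      have hiv : i ≠ v := by simpa [leafVars, leafList] using hi
      show Dk i (φ (X v)) = 0
      rw [Dk_algebraMap, pderiv_X_of_ne (Ne.symm hiv), map_zero]
    · intro i hi
      have hiv : i = v := by simpa [leafVars, leafList] using hi
      subst hiv
      show Dk i (φ (X i)) ≠ 0
      rw [Dk_algebraMap, pderiv_X_self, map_one]
      exact one_ne_zero
  | node op l r ihl ihr =>
    obtain ⟨hl, hr, hdisj⟩ := readOnce_node hT
    obtain ⟨ihl0, ihl1⟩ := ihl hl
    obtain ⟨ihr0, ihr1⟩ := ihr hr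
    have hvl : val l ≠ 0 := by
      obtain ⟨x, hx⟩ := leafVars_nonempty l
      intro h0
      exact ihl1 x hx (by rw [h0, Dk_zero])
    have hvr : val r ≠ 0 := by
      obtain ⟨x, hx⟩ := leafVars_nonempty r
      intro h0
      exact ihr1 x hx (by rw [h0, Dk_zero])
    have hmem : ∀ i, i ∈ leafVars (ETree.node op l r) ↔ i ∈ leafVars l ∨ i ∈ leafVars r := by
      intro i; rw [leafVars_node]; exact Finset.mem_union
    constructor
    · intro i hi
      rw [hmem] at hi
      push_neg at hi
      have h0l : Dk i (val l) = 0 := ihl0 i hi.1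
      have h0r : Dk i (val r) = 0 := ihr0 i hi.2
      cases op with
      | add => show Dk i (val l + val r) = 0; rw [Dk_add, h0l, h0r, add_zero]
      | sub => show Dk i (val l - val r) = 0; rw [Dk_sub, h0l, h0r, sub_zero]
      | mul => show Dk i (val l * val r) = 0; rw [Dk_mul, h0l, h0r]; ring
      | div => show Dk i (val l / val r) = 0; rw [Dk_div _ _ _ hvr, h0l, h0r]; ring_nf
    · intro i hi
      rw [hmem] at hi
      rcases hi with hi | hi
      · have hir : i ∉ leafVars r := Finset.disjoint_left.mp hdisj hi
        have h1 : Dk i (val l) ≠ 0 := ihl1 i hi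
        have h0 : Dk i (val r) = 0 := ihr0 i hir
        cases op with
        | add => show Dk i (val l + val r) ≠ 0; rw [Dk_add, h0, add_zero]; exact h1
        | sub => show Dk i (val l - val r) ≠ 0; rw [Dk_sub, h0, sub_zero]; exact h1
        | mul =>
          show Dk i (val l * val r) ≠ 0
          rw [Dk_mul, h0, mul_zero, add_zero]
          exact mul_ne_zero h1 hvr
        | div =>
          show Dk i (val l / val r) ≠ 0
          rw [Dk_div _ _ _ hvr, h0, mul_zero, sub_zero]
          exact div_ne_zero (mul_ne_zero h1 hvr) (pow_ne_zero 2 hvr)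
      · have hil : i ∉ leafVars l := Finset.disjoint_right.mp hdisj hi
        have h1 : Dk i (val r) ≠ 0 := ihr1 i hi
        have h0 : Dk i (val l) = 0 := ihl0 i hil
        cases op with
        | add => show Dk i (val l + val r) ≠ 0; rw [Dk_add, h0, zero_add]; exact h1
        | sub =>
          show Dk i (val l - val r) ≠ 0
          rw [Dk_sub, h0, zero_sub]
          exact neg_ne_zero.mpr h1
        | mul =>
          show Dk i (val l * val r) ≠ 0
          rw [Dk_mul, h0, zero_mul, zero_add]
          exact mul_ne_zero hvl h1
        | div =>
          show Dk i (val l / val r) ≠ 0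
          rw [Dk_div _ _ _ hvr, h0, zero_mul, zero_sub]
          exact div_ne_zero (neg_ne_zero.mpr (mul_ne_zero hvl h1)) (pow_ne_zero 2 hvr)

lemma val_ne_zero (T : ETree n) (hT : ReadOnce T) : val T ≠ 0 := by
  obtain ⟨x, hx⟩ := leafVars_nonempty T
  intro h0
  exact (deriv_val T hT).2 x hx (by rw [h0, Dk_zero])

lemma mem_leafVars_iff (T : ETree n) (hT : ReadOnce T) (i : Fin n) :
    i ∈ leafVars T ↔ Dk i (val T) ≠ 0 := by
  constructor
  · exact (deriv_val T hT).2 i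
  · intro h
    by_contra hi
    exact h ((deriv_val T hT).1 i hi)

lemma core_md (x y : Fin n) (A B : K n)
    (hxA : Dk x A ≠ 0) (hyB : Dk y B ≠ 0) (hyA : Dk y A = 0) (hxB : Dk x B = 0) :
    Dk y (Dk x (A * B)) ≠ 0 := by
  rw [Dk_mul, hxB, mul_zero, add_zero, Dk_mul]
  have h2 : Dk y (Dk x A) = 0 := by rw [Dk_comm, hyA, Dk_zero]
  rw [h2, zero_mul, zero_add]
  exact mul_ne_zero hxA hyB

lemma core_as_add (x y : Fin n) (A B : K n) (hyA : Dk y A = 0) (hxB : Dk x B = 0) :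
    Dk y (Dk x (A + B)) = 0 := by
  rw [Dk_add, hxB, add_zero, Dk_comm, hyA, Dk_zero]

lemma core_as_sub (x y : Fin n) (A B : K n) (hyA : Dk y A = 0) (hxB : Dk x B = 0) :
    Dk y (Dk x (A - B)) = 0 := by
  rw [Dk_sub, hxB, sub_zero, Dk_comm, hyA, Dk_zero]


lemma as_md_contra (op1 op2 : Op) (l1 r1 l2 r2 : ETree n)
    (hop1 : op1 = Op.add ∨ op1 = Op.sub) (hop2 : op2 = Op.mul ∨ op2 = Op.div)
    (h1 : ReadOnce (ETree.node op1 l1 r1)) (h2 : ReadOnce (ETree.node op2 l2 r2))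
    (hval : val (ETree.node op1 l1 r1) = val (ETree.node op2 l2 r2)) : False := by
  obtain ⟨hl1, hr1, hd1⟩ := readOnce_node h1
  obtain ⟨hl2, hr2, hd2⟩ := readOnce_node h2
  set S := leafVars l1 with hS
  set S2 := leafVars r1 with hS2
  set U := leafVars l2 with hU
  set U2 := leafVars r2 with hU2
  have hVeq : leafVars (ETree.node op1 l1 r1) = leafVars (ETree.node op2 l2 r2) := by
    ext i
    rw [mem_leafVars_iff _ h1, mem_leafVars_iff _ h2, hval]
  have hV : S ∪ S2 = U ∪ U2 := by
    rw [hS, hS2, hU, hU2, ← leafVars_node op1, ← leafVars_node op2, hVeq]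
  have hsep : ∃ x ∈ U, ∃ y ∈ U2, ¬(x ∈ S ↔ y ∈ S) := by
    by_contra hcon
    push_neg at hcon
    obtain ⟨x0, hx0⟩ := leafVars_nonempty l2
    obtain ⟨y0, hy0⟩ := leafVars_nonempty r2
    obtain ⟨s, hs⟩ := leafVars_nonempty l1
    obtain ⟨t, ht⟩ := leafVars_nonempty r1
    have ht' : t ∉ S := Finset.disjoint_right.mp hd1 ht
    have hall : ∀ v, v ∈ U ∪ U2 → (v ∈ S ↔ x0 ∈ S) := by
      intro v hv
      rcases Finset.mem_union.mp hv with hv | hv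
      · exact (hcon v hv y0 hy0).trans (hcon x0 hx0 y0 hy0).symm
      · exact (hcon x0 hx0 v hv).symm
    have hsU : s ∈ U ∪ U2 := by rw [← hV]; exact Finset.mem_union_left _ hs
    have htU : t ∈ U ∪ U2 := by rw [← hV]; exact Finset.mem_union_right _ ht
    exact (fun hx => ht' ((hall t htU).mpr hx)) ((hall s hsU).mp hs)
  obtain ⟨x, hxU, y, hyU2, hxy⟩ := hsep
  have hxl2 : Dk x (val l2) ≠ 0 := (mem_leafVars_iff l2 hl2 x).mp hxU
  have hyr2 : Dk y (val r2) ≠ 0 := (mem_leafVars_iff r2 hr2 y).mp hyU2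
  have hyl2 : Dk y (val l2) = 0 := (deriv_val l2 hl2).1 y (Finset.disjoint_right.mp hd2 hyU2)
  have hxr2 : Dk x (val r2) = 0 := (deriv_val r2 hr2).1 x (Finset.disjoint_left.mp hd2 hxU)
  have hvr2 : val r2 ≠ 0 := val_ne_zero r2 hr2
  have hMD : Dk y (Dk x (val (ETree.node op2 l2 r2))) ≠ 0 := by
    rcases hop2 with rfl | rfl
    · exact core_md x y _ _ hxl2 hyr2 hyl2 hxr2
    · show Dk y (Dk x (val l2 / val r2)) ≠ 0
      rw [div_eq_mul_inv]
      apply core_md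
      · exact hxl2
      · rw [Dk_inv _ _ hvr2]
        exact neg_ne_zero.mpr (div_ne_zero hyr2 (pow_ne_zero 2 hvr2))
      · exact hyl2
      · rw [Dk_inv _ _ hvr2, hxr2]
        simp
  have hx12 : x ∈ S ∪ S2 := by rw [hV]; exact Finset.mem_union_left _ hxU
  have hy12 : y ∈ S ∪ S2 := by rw [hV]; exact Finset.mem_union_right _ hyU2
  have hAS : Dk y (Dk x (val (ETree.node op1 l1 r1))) = 0 := by
    by_cases hxS : x ∈ S
    · have hyS : y ∉ S := fun h => hxy ⟨fun _ => h, fun _ => hxS⟩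
      have e1 : Dk y (val l1) = 0 := (deriv_val l1 hl1).1 y hyS
      have e2 : Dk x (val r1) = 0 := (deriv_val r1 hr1).1 x (Finset.disjoint_left.mp hd1 hxS)
      rcases hop1 with rfl | rfl
      · exact core_as_add x y _ _ e1 e2
      · exact core_as_sub x y _ _ e1 e2
    · have hyS : y ∈ S := by
        by_contra hyS
        exact hxy (iff_of_false hxS hyS)
      have e1 : Dk x (val l1) = 0 := (deriv_val l1 hl1).1 x hxS
      have e2 : Dk y (val r1) = 0 := (deriv_val r1 hr1).1 y (Finset.disjoint_left.mp hd1 hyS)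
      rw [Dk_comm]
      rcases hop1 with rfl | rfl
      · exact core_as_add y x _ _ e1 e2
      · exact core_as_sub y x _ _ e1 e2
  rw [hval] at hAS
  exact hMD hAS

end RC

/-- Theorem 2, first part: if two read-once expression trees with at least one internal
node have the same value, then their root chains have the same type: the root of one is
labeled `+` or `−` iff the root of the other is labeled `+` or `−`. -/
theorem root_chain_same_type (n : ℕ) (op1 op2 : Op) (l1 r1 l2 r2 : ETree n)
    (h1 : ReadOnce (ETree.node op1 l1 r1)) (h2 : ReadOnce (ETree.node op2 l2 r2))
    (hval : val (ETree.node op1 l1 r1) = val (ETree.node op2 l2 r2)) :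
    (op1 = Op.add ∨ op1 = Op.sub) ↔ (op2 = Op.add ∨ op2 = Op.sub) := by
  constructor
  · intro hop
    by_contra hop2n
    have hop2' : op2 = Op.mul ∨ op2 = Op.div := by cases op2 <;> simp_all
    exact RC.as_md_contra op1 op2 l1 r1 l2 r2 hop hop2' h1 h2 hval
  · intro hop
    by_contra hop1n
    have hop1' : op1 = Op.mul ∨ op1 = Op.div := by cases op1 <;> simp_all
    exact RC.as_md_contra op2 op1 l2 r2 l1 r1 hop hop1' h2 h1 hval.symm
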